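/- Assume the N-player Riccati system has a solution (P_1, …, P_N) on [0, T]. For 1 ≤ i ≤ N let J_{1i} ∈ ℝ^{Nn×Nn} be the block-permutation matrix obtained from I_{Nn} (partitioned into N×N blocks of size n×n) by exchanging the 1st and i-th block rows (so J_{1i}ᵀ = J_{1i}⁻¹ = J_{1i}). Then for every i > 1 and every t ∈ [0,T], P_i(t) = J_{1i}ᵀ P_1(t) J_{1i}. -/

import Mathlib

open Matrix

/-- `Â = I_N ⊗ A + (1/N)(𝟙_{N×N} ⊗ G)`, written entrywise. -/
noncomputable def hatA (n N : ℕ) (A G : Matrix (Fin n) (Fin n) ℝ) :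
    Matrix (Fin N × Fin n) (Fin N × Fin n) ℝ :=
  Matrix.of fun p q => (if p.1 = q.1 then A p.2 q.2 else 0) + (1 / (N : ℝ)) * G p.2 q.2

/-- `B_k = e_k ⊗ B`. -/
noncomputable def Bblk (n n1 N : ℕ) (B : Matrix (Fin n) (Fin n1) ℝ) (k : Fin N) :
    Matrix (Fin N × Fin n) (Fin n1) ℝ :=
  Matrix.of fun p c => if p.1 = k then B p.2 c else 0

/-- `K_i = [0,…,0, I_n, 0,…,0] − (1/N)[Γ, …, Γ]` with `I_n` in the `i`-th block. -/
noncomputable def Kblk (n N : ℕ) (Γ : Matrix (Fin n) (Fin n) ℝ) (i : Fin N) :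
    Matrix (Fin n) (Fin N × Fin n) ℝ :=
  Matrix.of fun r q => (if q.1 = i ∧ r = q.2 then (1 : ℝ) else 0) - (1 / (N : ℝ)) * Γ r q.2

/-- `Q_i = K_iᵀ Q K_i` (and `Q_{if} = K_{if}ᵀ Q_f K_{if}` with `Γ_f, Q_f`). -/
noncomputable def Qblk (n N : ℕ) (Q Γ : Matrix (Fin n) (Fin n) ℝ) (i : Fin N) :
    Matrix (Fin N × Fin n) (Fin N × Fin n) ℝ :=
  (Kblk n N Γ i)ᵀ * Q * Kblk n N Γ i

/-- Right-hand side of the `N`-player Riccati system: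
`−(P_i Â + Âᵀ P_i) + P_i Σ_k B_k R⁻¹ B_kᵀ P_k + Σ_k P_k B_k R⁻¹ B_kᵀ P_i
  − P_i B_i R⁻¹ B_iᵀ P_i − Q_i`. -/
noncomputable def riccatiRHS (n n1 N : ℕ) (A G Q Γ : Matrix (Fin n) (Fin n) ℝ)
    (B : Matrix (Fin n) (Fin n1) ℝ) (R : Matrix (Fin n1) (Fin n1) ℝ)
    (P : Fin N → Matrix (Fin N × Fin n) (Fin N × Fin n) ℝ) (i : Fin N) :
    Matrix (Fin N × Fin n) (Fin N × Fin n) ℝ :=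
  -(P i * hatA n N A G + (hatA n N A G)ᵀ * P i)
    + P i * (∑ k, Bblk n n1 N B k * R⁻¹ * (Bblk n n1 N B k)ᵀ * P k)
    + (∑ k, P k * Bblk n n1 N B k * R⁻¹ * (Bblk n n1 N B k)ᵀ) * P i
    - P i * Bblk n n1 N B i * R⁻¹ * (Bblk n n1 N B i)ᵀ * P i
    - Qblk n N Q Γ i

/-- `(P_1, …, P_N)` solves the `N`-player Riccati terminal value problem on `[τ, T]`:
each `P_i` is differentiable on `[τ,T]` with derivative given by the Riccati right-hand
side (entrywise), and `P_i(T) = Q_{if}`. -/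
def IsRiccatiSol (n n1 N : ℕ) (A G Q Qf Γ Γf : Matrix (Fin n) (Fin n) ℝ)
    (B : Matrix (Fin n) (Fin n1) ℝ) (R : Matrix (Fin n1) (Fin n1) ℝ) (τ T : ℝ)
    (P : Fin N → ℝ → Matrix (Fin N × Fin n) (Fin N × Fin n) ℝ) : Prop :=
  (∀ i, ∀ t ∈ Set.Icc τ T, ∀ p q,
      HasDerivWithinAt (fun s => P i s p q)
        (riccatiRHS n n1 N A G Q Γ B R (fun k => P k t) i p q) (Set.Icc τ T) t)
  ∧ ∀ i, P i T = Qblk n N Qf Γf i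

/-- The block-permutation matrix `J_{ab}` obtained from `I_{Nn}` by exchanging the
`a`-th and `b`-th block rows (blocks of size `n×n`). -/
noncomputable def Jmat (n N : ℕ) (a b : Fin N) :
    Matrix (Fin N × Fin n) (Fin N × Fin n) ℝ :=
  Matrix.of fun p q => if q = (Equiv.swap a b p.1, p.2) then (1 : ℝ) else 0


namespace RicAux

open Matrix

variable {n n1 N : ℕ}

/-- The block-swap permutation of indices. -/
def pe (n : ℕ) {N : ℕ} (a b : Fin N) : (Fin N × Fin n) ≃ (Fin N × Fin n) :=
  (Equiv.swap a b).prodCongr (Equiv.refl (Fin n))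

lemma pe_apply (a b : Fin N) (p : Fin N × Fin n) :
    pe n a b p = (Equiv.swap a b p.1, p.2) := rfl

lemma pe_symm (a b : Fin N) : (pe n a b).symm = pe n a b := by
  simp [pe, Equiv.prodCongr_symm]

lemma Jmat_eq (a b : Fin N) :
    Jmat n N a b = ((pe n a b).toPEquiv.toMatrix : Matrix _ _ ℝ) := by
  ext p q
  simp [Jmat, Equiv.toPEquiv_apply, pe_apply, Option.mem_some_iff, eq_comm]

lemma Jmat_transpose (a b : Fin N) : (Jmat n N a b)ᵀ = Jmat n N a b := by
  rw [Jmat_eq, ← PEquiv.toMatrix_symm, ← Equiv.toPEquiv_symm, pe_symm, ← Jmat_eq]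

lemma conj_eq (a b : Fin N) (M : Matrix (Fin N × Fin n) (Fin N × Fin n) ℝ) :
    (Jmat n N a b)ᵀ * M * Jmat n N a b = M.submatrix (pe n a b) (pe n a b) := by
  rw [Jmat_transpose, Jmat_eq, PEquiv.toMatrix_toPEquiv_mul, PEquiv.mul_toMatrix_toPEquiv,
    pe_symm, submatrix_submatrix]
  rfl

lemma submul {l m o l' m' o' : Type*} [Fintype m] [Fintype m']
    (X : Matrix l m ℝ) (Y : Matrix m o ℝ) (e₁ : l' ≃ l) (e₂ : m' ≃ m) (e₃ : o' ≃ o) :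
    (X * Y).submatrix e₁ e₃ = X.submatrix e₁ e₂ * Y.submatrix e₂ e₃ :=
  (submatrix_mul_equiv X Y e₁ e₂ e₃).symm

lemma hatA_sub (a b : Fin N) (A G : Matrix (Fin n) (Fin n) ℝ) :
    (hatA n N A G).submatrix (pe n a b) (pe n a b) = hatA n N A G := by
  ext p q
  simp [hatA, pe_apply]

lemma Bblk_sub (a b : Fin N) (B : Matrix (Fin n) (Fin n1) ℝ) (k : Fin N) :
    (Bblk n n1 N B k).submatrix (pe n a b) (Equiv.refl (Fin n1)) =
      Bblk n n1 N B (Equiv.swap a b k) := by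
  ext p c
  simp only [submatrix_apply, Bblk, Matrix.of_apply, pe_apply, Equiv.coe_refl, id]
  simp only [Equiv.swap_apply_eq_iff]

lemma Kblk_sub (a b : Fin N) (Γ : Matrix (Fin n) (Fin n) ℝ) (i : Fin N) :
    (Kblk n N Γ i).submatrix (Equiv.refl (Fin n)) (pe n a b) =
      Kblk n N Γ (Equiv.swap a b i) := by
  ext r q
  simp only [submatrix_apply, Kblk, Matrix.of_apply, pe_apply, Equiv.coe_refl, id]
  simp only [Equiv.swap_apply_eq_iff]

lemma Qblk_sub (a b : Fin N) (Q Γ : Matrix (Fin n) (Fin n) ℝ) (i : Fin N) :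
    (Qblk n N Q Γ i).submatrix (pe n a b) (pe n a b) = Qblk n N Q Γ (Equiv.swap a b i) := by
  rw [Qblk, submul _ _ (pe n a b) (Equiv.refl (Fin n)) (pe n a b),
    submul _ _ (pe n a b) (Equiv.refl (Fin n)) (Equiv.refl (Fin n)),
    ← transpose_submatrix, Kblk_sub]
  simp [Qblk, Equiv.coe_refl, Matrix.submatrix_id_id]

end RicAux

namespace RicAux
open Matrix

variable {n n1 N : ℕ}

lemma S_sub (a b : Fin N) (B : Matrix (Fin n) (Fin n1) ℝ) (R : Matrix (Fin n1) (Fin n1) ℝ)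
    (k : Fin N) :
    (Bblk n n1 N B k * R⁻¹ * (Bblk n n1 N B k)ᵀ).submatrix (pe n a b) (pe n a b)
      = Bblk n n1 N B (Equiv.swap a b k) * R⁻¹ * (Bblk n n1 N B (Equiv.swap a b k))ᵀ := by
  rw [submul _ _ (pe n a b) (Equiv.refl (Fin n1)) (pe n a b),
      submul _ _ (pe n a b) (Equiv.refl (Fin n1)) (Equiv.refl (Fin n1)),
      Bblk_sub, ← transpose_submatrix, Bblk_sub]
  simp [Equiv.coe_refl, Matrix.submatrix_id_id]

lemma key (a b : Fin N) (A G Q Γ : Matrix (Fin n) (Fin n) ℝ)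
    (B : Matrix (Fin n) (Fin n1) ℝ) (R : Matrix (Fin n1) (Fin n1) ℝ)
    (M : Fin N → Matrix (Fin N × Fin n) (Fin N × Fin n) ℝ) (i : Fin N) :
    riccatiRHS n n1 N A G Q Γ B R
        (fun k => (M (Equiv.swap a b k)).submatrix (pe n a b) (pe n a b)) i
      = (riccatiRHS n n1 N A G Q Γ B R M (Equiv.swap a b i)).submatrix
          (pe n a b) (pe n a b) := by
  set σ := Equiv.swap a b with hσ
  set e := pe n a b with he
  have hC : ∀ X Y : Matrix (Fin N × Fin n) (Fin N × Fin n) ℝ,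
      (X * Y).submatrix e e = X.submatrix e e * Y.submatrix e e := fun X Y => submul X Y e e e
  have hCm1 : ∀ (X : Matrix (Fin N × Fin n) (Fin n1) ℝ) (Y : Matrix (Fin n1) (Fin N × Fin n) ℝ),
      (X * Y).submatrix e e = X.submatrix e (Equiv.refl (Fin n1)) *
        Y.submatrix (Equiv.refl (Fin n1)) e := fun X Y => submul X Y e (Equiv.refl _) e
  have hCm2 : ∀ (X : Matrix (Fin n1) (Fin n1) ℝ) (Y : Matrix (Fin n1) (Fin N × Fin n) ℝ),
      (X * Y).submatrix (Equiv.refl (Fin n1)) e = X *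
        Y.submatrix (Equiv.refl (Fin n1)) e := by
    intro X Y
    rw [submul X Y (Equiv.refl _) (Equiv.refl _) e]
    simp [Equiv.coe_refl, Matrix.submatrix_id_id]
  have hCm3 : ∀ (X : Matrix (Fin n1) (Fin N × Fin n) ℝ)
      (Y : Matrix (Fin N × Fin n) (Fin N × Fin n) ℝ),
      (X * Y).submatrix (Equiv.refl (Fin n1)) e = X.submatrix (Equiv.refl (Fin n1)) e *
        Y.submatrix e e := fun X Y => submul X Y (Equiv.refl _) e e
  have hCa : ∀ X Y : Matrix (Fin N × Fin n) (Fin N × Fin n) ℝ,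
      (X + Y).submatrix e e = X.submatrix e e + Y.submatrix e e := by
    intro X Y; ext p q; simp
  have hCn : ∀ X : Matrix (Fin N × Fin n) (Fin N × Fin n) ℝ,
      (-X).submatrix e e = -(X.submatrix e e) := by intro X; ext p q; simp
  have hCs : ∀ X Y : Matrix (Fin N × Fin n) (Fin N × Fin n) ℝ,
      (X - Y).submatrix e e = X.submatrix e e - Y.submatrix e e := by
    intro X Y; ext p q; simp
  have hCsum : ∀ f : Fin N → Matrix (Fin N × Fin n) (Fin N × Fin n) ℝ,
      (∑ k, f k).submatrix e e = ∑ k, (f k).submatrix e e := by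
    intro f; ext p q; simp [Matrix.sum_apply]
  have hA : (hatA n N A G).submatrix e e = hatA n N A G := hatA_sub a b A G
  have hAT : ((hatA n N A G)ᵀ).submatrix e e = (hatA n N A G)ᵀ := by
    rw [he, ← transpose_submatrix, hatA_sub]
  have hB : ∀ k, (Bblk n n1 N B k).submatrix e (Equiv.refl (Fin n1)) = Bblk n n1 N B (σ k) :=
    fun k => Bblk_sub a b B k
  have hBT : ∀ k, ((Bblk n n1 N B k)ᵀ).submatrix (Equiv.refl (Fin n1)) e =
      (Bblk n n1 N B (σ k))ᵀ := by
    intro k; rw [he, ← transpose_submatrix, Bblk_sub]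
  have hQ : ∀ j, (Qblk n N Q Γ j).submatrix e e = Qblk n N Q Γ (σ j) :=
    fun j => Qblk_sub a b Q Γ j
  have hCm4 : ∀ (X : Matrix (Fin N × Fin n) (Fin n1) ℝ) (Y : Matrix (Fin n1) (Fin n1) ℝ),
      (X * Y).submatrix e (Equiv.refl (Fin n1)) = X.submatrix e (Equiv.refl (Fin n1)) * Y := by
    intro X Y
    rw [submul X Y e (Equiv.refl _) (Equiv.refl _)]
    simp [Equiv.coe_refl, Matrix.submatrix_id_id]
  have hCm5 : ∀ (X : Matrix (Fin N × Fin n) (Fin N × Fin n) ℝ)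
      (Y : Matrix (Fin N × Fin n) (Fin n1) ℝ),
      (X * Y).submatrix e (Equiv.refl (Fin n1)) = X.submatrix e e *
        Y.submatrix e (Equiv.refl (Fin n1)) := fun X Y => submul X Y e e (Equiv.refl _)
  have hσσ : ∀ x, σ (σ x) = x := fun x => Equiv.swap_apply_self a b x
  simp only [riccatiRHS]
  simp only [hCa, hCs, hCn, hCsum, hC, hCm1, hCm2, hCm3, hCm4, hCm5, hB, hBT, hA, hAT, hQ,
    hσσ]
  have hs1 : (∑ x, Bblk n n1 N B (σ x) * R⁻¹ * (Bblk n n1 N B (σ x))ᵀ * (M x).submatrix ⇑e ⇑e)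
      = ∑ x, Bblk n n1 N B x * R⁻¹ * (Bblk n n1 N B x)ᵀ * (M (σ x)).submatrix ⇑e ⇑e := by
    apply Fintype.sum_equiv σ
    intro x
    rw [hσσ]
  have hs2 : (∑ x, (M x).submatrix ⇑e ⇑e * Bblk n n1 N B (σ x) * R⁻¹ * (Bblk n n1 N B (σ x))ᵀ)
      = ∑ x, (M (σ x)).submatrix ⇑e ⇑e * Bblk n n1 N B x * R⁻¹ * (Bblk n n1 N B x)ᵀ := by
    apply Fintype.sum_equiv σ
    intro x
    rw [hσσ]
  rw [hs1, hs2]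

end RicAux

namespace RicAux
open Matrix

lemma contDiff_F (n n1 N : ℕ) (A G Q Γ : Matrix (Fin n) (Fin n) ℝ)
    (B : Matrix (Fin n) (Fin n1) ℝ) (R : Matrix (Fin n1) (Fin n1) ℝ) :
    ContDiff ℝ 1 (fun x : (Fin N × (Fin N × Fin n) × (Fin N × Fin n)) → ℝ =>
      fun z : Fin N × (Fin N × Fin n) × (Fin N × Fin n) =>
        riccatiRHS n n1 N A G Q Γ B R
          (fun k => Matrix.of fun p q => x (k, p, q)) z.1 z.2.1 z.2.2) := by
  rw [contDiff_pi]
  intro z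
  simp only [riccatiRHS, Matrix.sub_apply, Matrix.add_apply, Matrix.neg_apply,
    Matrix.mul_apply, Matrix.sum_apply, Matrix.transpose_apply, Matrix.of_apply]
  repeat
    first
    | exact contDiff_const
    | exact contDiff_apply ℝ ℝ _
    | apply ContDiff.neg
    | apply ContDiff.add
    | apply ContDiff.sub
    | apply ContDiff.mul
    | (apply ContDiff.sum; intro _ _)

end RicAux

open RicAux

/-- If the `N`-player Riccati system has a solution on `[0, T]`, then
for every player index `i` other than the first one (`i₀` with `i₀.val = 0`),
`P_i(t) = J_{1i}ᵀ P_1(t) J_{1i}` on `[0, T]`. -/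
theorem riccati_Pi_permutation_of_P1
    (n n1 N : ℕ) (hn : 0 < n) (hn1 : 0 < n1) (hN : 0 < N)
    (T : ℝ) (hT : 0 < T)
    (A G Q Qf Γ Γf : Matrix (Fin n) (Fin n) ℝ)
    (B : Matrix (Fin n) (Fin n1) ℝ) (R : Matrix (Fin n1) (Fin n1) ℝ)
    (hQ : Q.PosSemidef) (hQf : Qf.PosSemidef) (hR : R.PosDef)
    (P : Fin N → ℝ → Matrix (Fin N × Fin n) (Fin N × Fin n) ℝ)
    (hP : IsRiccatiSol n n1 N A G Q Qf Γ Γf B R 0 T P) :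
    ∀ i₀ i : Fin N, i₀.val = 0 → i ≠ i₀ →
      ∀ t ∈ Set.Icc (0:ℝ) T,
        P i t = (Jmat n N i₀ i)ᵀ * P i₀ t * Jmat n N i₀ i := by
  intro i₀ i _ _ t ht
  set σ : Equiv.Perm (Fin N) := Equiv.swap i₀ i with hσdef
  set e : (Fin N × Fin n) ≃ (Fin N × Fin n) := pe n i₀ i with hedef
  -- the state space and the vector field
  set Z := (Fin N × (Fin N × Fin n) × (Fin N × Fin n)) → ℝ with hZ
  set F : Z → Z := fun x z =>
    riccatiRHS n n1 N A G Q Γ B R (fun k => Matrix.of fun p q => x (k, p, q)) z.1 z.2.1 z.2.2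
    with hF
  have hFcd : ContDiff ℝ 1 F := contDiff_F n n1 N A G Q Γ B R
  -- the two candidate solutions
  set u : ℝ → Z := fun s z => P z.1 s z.2.1 z.2.2 with hu
  set w : ℝ → Z := fun s z => P (σ z.1) s (e z.2.1) (e z.2.2) with hw
  -- derivatives
  have hu' : ∀ s ∈ Set.Icc (0:ℝ) T, HasDerivWithinAt u (F (u s)) (Set.Icc (0:ℝ) T) s := by
    intro s hs
    rw [hasDerivWithinAt_pi]
    intro z
    exact hP.1 z.1 s hs z.2.1 z.2.2
  have hw' : ∀ s ∈ Set.Icc (0:ℝ) T, HasDerivWithinAt w (F (w s)) (Set.Icc (0:ℝ) T) s := by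
    intro s hs
    rw [hasDerivWithinAt_pi]
    intro z
    have hder := hP.1 (σ z.1) s hs (e z.2.1) (e z.2.2)
    have hval : F (w s) z =
        riccatiRHS n n1 N A G Q Γ B R (fun k => P k s) (σ z.1) (e z.2.1) (e z.2.2) := by
      have hk := key i₀ i A G Q Γ B R (fun k => P k s) z.1
      calc F (w s) z
          = riccatiRHS n n1 N A G Q Γ B R
              (fun k => ((P (σ k) s)).submatrix e e) z.1 z.2.1 z.2.2 := rfl
        _ = (riccatiRHS n n1 N A G Q Γ B R (fun k => P k s) (σ z.1)).submatrix
              (⇑e) (⇑e) z.2.1 z.2.2 := by rw [← hk]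
        _ = _ := rfl
    rw [hval]
    exact hder
  -- continuity
  have hucont : ContinuousOn u (Set.Icc (0:ℝ) T) :=
    fun s hs => (hu' s hs).continuousWithinAt
  have hwcont : ContinuousOn w (Set.Icc (0:ℝ) T) :=
    fun s hs => (hw' s hs).continuousWithinAt
  -- terminal condition
  have hterm : u T = w T := by
    funext z
    show P z.1 T z.2.1 z.2.2 = P (σ z.1) T (e z.2.1) (e z.2.2)
    rw [hP.2, hP.2]
    have hq := Qblk_sub i₀ i Qf Γf (σ z.1)
    have : (Qblk n N Qf Γf (σ z.1)).submatrix (⇑e) (⇑e) z.2.1 z.2.2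
        = Qblk n N Qf Γf (σ (σ z.1)) z.2.1 z.2.2 := by rw [hq]
    simpa [hσdef, Equiv.swap_apply_self, Matrix.submatrix_apply] using this.symm
  -- a compact convex set containing both trajectories
  obtain ⟨C₁, hC₁⟩ := isCompact_Icc.exists_bound_of_continuousOn hucont
  obtain ⟨C₂, hC₂⟩ := isCompact_Icc.exists_bound_of_continuousOn hwcont
  set C : ℝ := max C₁ C₂ with hC
  set s : Set Z := Metric.closedBall 0 C with hs
  -- Lipschitz bound on s
  have hfder : Continuous (fderiv ℝ F) := hFcd.continuous_fderiv one_ne_zero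
  obtain ⟨Cf, hCf⟩ := (isCompact_closedBall (0:Z) C).exists_bound_of_continuousOn
    hfder.continuousOn
  set K : NNReal := ⟨max Cf 0, le_max_right _ _⟩ with hK
  have hlip : LipschitzOnWith K F s := by
    apply Convex.lipschitzOnWith_of_nnnorm_hasFDerivWithin_le (f' := fderiv ℝ F)
      ?_ ?_ (convex_closedBall _ _)
    · intro x hx
      exact ((hFcd.differentiable one_ne_zero) x).hasFDerivAt.hasFDerivWithinAt
    · intro x hx
      rw [← NNReal.coe_le_coe]
      exact le_trans (hCf x hx) (le_max_left _ _)
  -- apply uniqueness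
  have huniq : Set.EqOn u w (Set.Icc (0:ℝ) T) := by
    apply ODE_solution_unique_of_mem_Icc_left (v := fun _ => F) (s := fun _ => s)
      (fun _ _ => hlip) hucont ?_ ?_ hwcont ?_ ?_ hterm
    · intro s' hs'
      refine (hu' s' ⟨le_of_lt hs'.1, hs'.2⟩).mono_of_mem_nhdsWithin ?_
      refine Filter.mem_of_superset
        (Filter.inter_mem (mem_nhdsWithin_of_mem_nhds (Ioi_mem_nhds hs'.1))
          self_mem_nhdsWithin) ?_
      rintro x ⟨hx1, hx2⟩
      exact ⟨le_of_lt hx1, le_trans hx2 hs'.2⟩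
    · intro s' hs'
      exact mem_closedBall_zero_iff.2
        (le_trans (hC₁ s' ⟨le_of_lt hs'.1, hs'.2⟩) (le_max_left _ _))
    · intro s' hs'
      refine (hw' s' ⟨le_of_lt hs'.1, hs'.2⟩).mono_of_mem_nhdsWithin ?_
      refine Filter.mem_of_superset
        (Filter.inter_mem (mem_nhdsWithin_of_mem_nhds (Ioi_mem_nhds hs'.1))
          self_mem_nhdsWithin) ?_
      rintro x ⟨hx1, hx2⟩
      exact ⟨le_of_lt hx1, le_trans hx2 hs'.2⟩
    · intro s' hs'
      exact mem_closedBall_zero_iff.2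
        (le_trans (hC₂ s' ⟨le_of_lt hs'.1, hs'.2⟩) (le_max_right _ _))
  -- conclude
  have hzt := huniq ht
  ext p q
  rw [conj_eq]
  have := congrFun hzt (i, p, q)
  simpa [hu, hw, hσdef, Equiv.swap_apply_right, Matrix.submatrix_apply] using this
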